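/- Every reduced word in the Temperley-Lieb generators can be written in Jones' normal form (u_{j_1} u_{j_1-1} ... u_{k_1})(u_{j_2} u_{j_2-1} ... u_{k_2}) ... (u_{j_r} u_{j_r-1} ... u_{k_r}) where 0 < j_1 < j_2 < ... < j_r < n and 0 < k_1 < k_2 < ... < k_r < n and j_i >= k_i for each i. -/

import Mathlib

/-- The defining relations of the Temperley–Lieb algebra with `m` generators
(`TL_n` for `n = m+1`). -/
inductive TLRel (β : ℂ) (m : ℕ) : FreeAlgebra ℂ (Fin m) → FreeAlgebra ℂ (Fin m) → Prop
  | sq (i : Fin m) :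
      TLRel β m (FreeAlgebra.ι ℂ i * FreeAlgebra.ι ℂ i) (β • FreeAlgebra.ι ℂ i)
  | absorb (i j : Fin m) (h : (i : ℕ) + 1 = (j : ℕ) ∨ (j : ℕ) + 1 = (i : ℕ)) :
      TLRel β m (FreeAlgebra.ι ℂ i * FreeAlgebra.ι ℂ j * FreeAlgebra.ι ℂ i)
        (FreeAlgebra.ι ℂ i)
  | comm (i j : Fin m) (h : (i : ℕ) + 1 < (j : ℕ) ∨ (j : ℕ) + 1 < (i : ℕ)) :
      TLRel β m (FreeAlgebra.ι ℂ i * FreeAlgebra.ι ℂ j)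
        (FreeAlgebra.ι ℂ j * FreeAlgebra.ι ℂ i)

/-- The abstract Temperley–Lieb algebra with parameter `β` and `m` generators. -/
abbrev TL (β : ℂ) (m : ℕ) : Type := RingQuot (TLRel β m)

/-- The generator `u_{i+1}` of `TL_{m+1}`. -/
noncomputable def TLgen (β : ℂ) (m : ℕ) (i : Fin m) : TL β m :=
  RingQuot.mkAlgHom ℂ (TLRel β m) (FreeAlgebra.ι ℂ i)

/-- The element of `TL` represented by a word in the generators. -/
noncomputable def wordProd (β : ℂ) (m : ℕ) (l : List (Fin m)) : TL β m :=
  (l.map (TLgen β m)).prod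

/-- A word is reduced if it is not (in the algebra) a scalar multiple of a word
with strictly fewer generators. -/
def Reduced (β : ℂ) (m : ℕ) (l : List (Fin m)) : Prop :=
  ¬ ∃ (l' : List (Fin m)) (c : ℂ),
      l'.length < l.length ∧ wordProd β m l = c • wordProd β m l'

/-- The decreasing consecutive run of generator indices `j, j-1, …, k`. -/
def descRun {m : ℕ} (j k : Fin m) : List (Fin m) :=
  (List.range (j.val + 1 - k.val)).map
    (fun t => ⟨j.val - t, Nat.lt_of_le_of_lt (Nat.sub_le _ _) j.isLt⟩)


section TLAux

variable {β : ℂ} {m : ℕ}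

/-! ### Basic word product lemmas -/

lemma wp_nil : wordProd β m [] = 1 := rfl

lemma wp_append (x y : List (Fin m)) :
    wordProd β m (x ++ y) = wordProd β m x * wordProd β m y := by
  simp [wordProd]

lemma wp_single (a : Fin m) : wordProd β m [a] = TLgen β m a := by
  simp [wordProd]

lemma wp_cons (a : Fin m) (x : List (Fin m)) :
    wordProd β m (a :: x) = TLgen β m a * wordProd β m x := by
  simp [wordProd]

lemma gen_sq (i : Fin m) : TLgen β m i * TLgen β m i = β • TLgen β m i := by
  have h := RingQuot.mkAlgHom_rel ℂ (TLRel.sq (β := β) (m := m) i)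
  simpa [TLgen, map_mul, map_smul] using h

lemma gen_absorb (i j : Fin m) (h : (i : ℕ) + 1 = (j : ℕ) ∨ (j : ℕ) + 1 = (i : ℕ)) :
    TLgen β m i * TLgen β m j * TLgen β m i = TLgen β m i := by
  have h2 := RingQuot.mkAlgHom_rel ℂ (TLRel.absorb (β := β) (m := m) i j h)
  simpa [TLgen, map_mul] using h2

lemma gen_comm (i j : Fin m) (h : (i : ℕ) + 1 < (j : ℕ) ∨ (j : ℕ) + 1 < (i : ℕ)) :
    TLgen β m i * TLgen β m j = TLgen β m j * TLgen β m i := by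
  have h2 := RingQuot.mkAlgHom_rel ℂ (TLRel.comm (β := β) (m := m) i j h)
  simpa [TLgen, map_mul] using h2

lemma wp_comm (a : Fin m) (B : List (Fin m))
    (h : ∀ b ∈ B, (b : ℕ) + 1 < (a : ℕ) ∨ (a : ℕ) + 1 < (b : ℕ)) :
    TLgen β m a * wordProd β m B = wordProd β m B * TLgen β m a := by
  induction B with
  | nil => simp [wp_nil]
  | cons b B ih =>
      have hb := h b (by simp)
      rw [wp_cons, ← mul_assoc, gen_comm a b (by omega), mul_assoc,
        ih (fun x hx => h x (by simp [hx])), ← mul_assoc]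

/-! ### descRun lemmas -/

lemma descRun_self (a : Fin m) : descRun a a = [a] := by
  unfold descRun
  rw [show a.val + 1 - a.val = 1 by omega]
  simp only [List.range_succ, List.range_zero, List.nil_append, List.map_cons, List.map_nil]
  congr 1

lemma descRun_mem {j k e : Fin m} (he : e ∈ descRun j k) :
    k.val ≤ e.val ∧ e.val ≤ j.val := by
  simp only [descRun, List.mem_map, List.mem_range] at he
  obtain ⟨t, ht, rfl⟩ := he
  simp; omega

lemma descRun_last (j k : Fin m) (h : k.val ≤ j.val) :
    ∃ W, descRun j k = W ++ [k] ∧ ∀ w ∈ W, k.val < w.val ∧ w.val ≤ j.val := by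
  refine ⟨(List.range (j.val - k.val)).map
      (fun t => ⟨j.val - t, Nat.lt_of_le_of_lt (Nat.sub_le _ _) j.isLt⟩), ?_, ?_⟩
  · unfold descRun
    rw [show j.val + 1 - k.val = (j.val - k.val) + 1 by omega, List.range_succ,
      List.map_append]
    congr 1
    simp only [List.map_cons, List.map_nil, List.cons.injEq, and_true]
    exact Fin.ext (by simp; omega)
  · intro w hw
    simp only [List.mem_map, List.mem_range] at hw
    obtain ⟨t, ht, rfl⟩ := hw
    simp; omega

lemma descRun_concat (j k k' : Fin m) (hkj : k.val ≤ j.val) (h : k'.val + 1 = k.val) :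
    descRun j k' = descRun j k ++ [k'] := by
  unfold descRun
  rw [show j.val + 1 - k'.val = (j.val + 1 - k.val) + 1 by omega, List.range_succ,
    List.map_append]
  congr 1
  simp only [List.map_cons, List.map_nil, List.cons.injEq, and_true]
  exact Fin.ext (by simp; omega)

lemma descRun_split' (j a k : Fin m) (hk : k.val < a.val) (ha : a.val ≤ j.val) :
    ∃ W B, descRun j k =
        (W ++ [a]) ++ ((⟨a.val - 1, Nat.lt_of_le_of_lt (Nat.sub_le _ _) a.isLt⟩ : Fin m) :: B)
      ∧ (∀ b ∈ B, b.val + 1 < a.val) := by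
  obtain ⟨W, hW, _⟩ := descRun_last j a (by omega)
  refine ⟨W, (List.range (a.val - 1 - k.val)).map
      (fun s => ⟨a.val - 2 - s, by have := a.isLt; omega⟩), ?_, ?_⟩
  · have hsp : descRun j k = descRun j a ++
        (List.range (a.val - k.val)).map
          (fun t => (⟨a.val - 1 - t, by have := a.isLt; omega⟩ : Fin m)) := by
      unfold descRun
      rw [show j.val + 1 - k.val = (j.val + 1 - a.val) + (a.val - k.val) by omega,
        List.range_add, List.map_append, List.map_map]
      congr 1
      apply List.map_congr_left
      intro t ht
      simp only [List.mem_range] at ht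
      exact Fin.ext (by simp; omega)
    rw [hsp, hW]
    rw [show a.val - k.val = (a.val - 1 - k.val) + 1 by omega,
      List.range_succ_eq_map, List.map_cons, List.map_map]
    congr 1
    refine List.cons_eq_cons.mpr ⟨Fin.ext rfl, ?_⟩
    apply List.map_congr_left
    intro t ht
    simp only [List.mem_range] at ht
    exact Fin.ext (by simp; omega)
  · intro b hb
    simp only [List.mem_map, List.mem_range] at hb
    obtain ⟨t, ht, rfl⟩ := hb
    simp; omega

/-! ### Normal form lists -/

def good {m : ℕ} (L : List (Fin m × Fin m)) : Prop :=
  (L.map Prod.fst).Pairwise (· < ·) ∧ (L.map Prod.snd).Pairwise (· < ·) ∧ ∀ p ∈ L, p.2 ≤ p.1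

def nfWord {m : ℕ} (L : List (Fin m × Fin m)) : List (Fin m) :=
  (L.map (fun p => descRun p.1 p.2)).flatten

lemma nfWord_nil : nfWord ([] : List (Fin m × Fin m)) = [] := rfl

lemma nfWord_append (L₁ L₂ : List (Fin m × Fin m)) :
    nfWord (L₁ ++ L₂) = nfWord L₁ ++ nfWord L₂ := by
  simp [nfWord]

lemma nfWord_singleton (p : Fin m × Fin m) : nfWord [p] = descRun p.1 p.2 := by
  simp [nfWord]

lemma good_nil : good ([] : List (Fin m × Fin m)) := by
  simp [good]

lemma good_append_iff (L₀ : List (Fin m × Fin m)) (p : Fin m × Fin m) :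
    good (L₀ ++ [p]) ↔ good L₀ ∧ (∀ x ∈ L₀, x.1 < p.1 ∧ x.2 < p.2) ∧ p.2 ≤ p.1 := by
  simp only [good, List.map_append, List.map_cons, List.map_nil,
    List.pairwise_append, List.pairwise_cons, List.mem_singleton, List.mem_append,
    List.Pairwise.nil, List.mem_map, and_true, List.not_mem_nil, false_implies, implies_true,
    true_and, forall_eq, forall_exists_index, and_imp]
  constructor
  · rintro ⟨⟨h1, h2⟩, ⟨h3, h4⟩, h5⟩
    exact ⟨⟨h1, h3, fun x hx => h5 x (Or.inl hx)⟩,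
      fun x hx => ⟨h2 _ x hx rfl, h4 _ x hx rfl⟩, h5 p (Or.inr rfl)⟩
  · rintro ⟨⟨h1, h3, h5⟩, h6, h7⟩
    refine ⟨⟨h1, fun a x hx ha => ha ▸ (h6 x hx).1⟩, ⟨h3, fun a x hx ha => ha ▸ (h6 x hx).2⟩, ?_⟩
    rintro x (hx | rfl)
    · exact h5 x hx
    · exact h7

/-! ### The key appending step -/

lemma nfWord_pair (j k : Fin m) : nfWord [(j, k)] = descRun j k := by simp [nfWord]

lemma good_concat_iff (L₀ : List (Fin m × Fin m)) (j k : Fin m) :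
    good (L₀ ++ [(j, k)]) ↔
      good L₀ ∧ (∀ x ∈ L₀, x.1.val < j.val ∧ x.2.val < k.val) ∧ k.val ≤ j.val :=
  good_append_iff L₀ (j, k)

lemma append_step (β : ℂ) {m : ℕ} (L : List (Fin m × Fin m)) (a : Fin m) :
    good L →
    (∃ L', good L' ∧
        (∀ x ∈ L', x.1 ∈ a :: L.map Prod.fst) ∧ (∀ x ∈ L', x.2 ∈ a :: L.map Prod.snd) ∧
        (nfWord L').length = (nfWord L).length + 1 ∧
        wordProd β m (nfWord L ++ [a]) = wordProd β m (nfWord L')) ∨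
    (∃ (l' : List (Fin m)) (c : ℂ), l'.length < (nfWord L).length + 1 ∧
        wordProd β m (nfWord L ++ [a]) = c • wordProd β m l') := by
  induction L using List.reverseRecOn with
  | nil =>
      intro _
      left
      refine ⟨[(a, a)], ?_, by simp, by simp, ?_, ?_⟩
      · simpa using (good_concat_iff [] a a).2 ⟨good_nil, by simp, le_refl _⟩
      · simp [nfWord, descRun_self]
      · simp [nfWord, descRun_self]
  | append_singleton L₀ p IH =>
      obtain ⟨j, k⟩ := p
      intro hL
      obtain ⟨hL₀, hbnd, hkj'⟩ := (good_concat_iff L₀ j k).1 hL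
      by_cases h1 : j.val < a.val
      · -- start a new block
        left
        refine ⟨(L₀ ++ [(j, k)]) ++ [(a, a)], ?_, ?_, ?_, ?_, ?_⟩
        · refine (good_concat_iff _ a a).2 ⟨hL, ?_, le_refl _⟩
          intro x hx
          rcases List.mem_append.1 hx with hx | hx
          · have hx1 := (hbnd x hx).1
            have hx2 := (hbnd x hx).2
            omega
          · simp only [List.mem_singleton] at hx
            subst hx
            simp only []
            omega
        · intro x hx
          rcases List.mem_append.1 hx with hx | hx
          · exact List.mem_cons_of_mem _ (List.mem_map.2 ⟨x, hx, rfl⟩)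
          · simp only [List.mem_singleton] at hx; subst hx; simp
        · intro x hx
          rcases List.mem_append.1 hx with hx | hx
          · exact List.mem_cons_of_mem _ (List.mem_map.2 ⟨x, hx, rfl⟩)
          · simp only [List.mem_singleton] at hx; subst hx; simp
        · rw [nfWord_append, nfWord_pair, descRun_self]
          simp
        · rw [nfWord_append (L₀ ++ [(j, k)]), nfWord_pair, descRun_self]
      · by_cases h2 : a.val < k.val
        · by_cases h3 : a.val + 1 = k.val
          · rcases List.eq_nil_or_concat L₀ with rfl | ⟨L₀₀, q, hq⟩
            on_goal 2 => rw [List.concat_eq_append] at hq; subst hq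
            · -- extend the unique block
              left
              have hext : descRun j k ++ [a] = descRun j a :=
                (descRun_concat j k a hkj' h3).symm
              refine ⟨[(j, a)], ?_, by simp, by simp, ?_, ?_⟩
              · simpa using (good_concat_iff [] j a).2 ⟨good_nil, by simp, by omega⟩
              · rw [List.nil_append, nfWord_pair, nfWord_pair]
                have := congrArg List.length hext
                simp only [List.length_append, List.length_cons, List.length_nil] at this
                omega
              · rw [List.nil_append, nfWord_pair, nfWord_pair, hext]
            · obtain ⟨j₂, k₂⟩ := q
              obtain ⟨hL₀₀, hbnd₂, hkj₂'⟩ := (good_concat_iff L₀₀ j₂ k₂).1 hL₀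
              have hk₂a : k₂.val ≤ a.val := by
                have hh : k₂.val < k.val := (hbnd (j₂, k₂) (by simp)).2
                omega
              by_cases h4 : k₂.val = a.val
              · -- inner reduction  u_a u_{a+1} u_a = u_a
                right
                obtain ⟨W', hW', _⟩ := descRun_last j₂ k₂ hkj₂'
                obtain ⟨C, hC, hCmem⟩ := descRun_last j k hkj'
                have hk₂ : k₂ = a := Fin.ext h4
                refine ⟨nfWord L₀₀ ++ W' ++ C ++ [a], 1, ?_, ?_⟩
                · have e1 := congrArg List.length hW'
                  have e2 := congrArg List.length hC
                  simp only [nfWord_append, nfWord_pair]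
                  simp only [List.length_append, List.length_cons, List.length_nil] at e1 e2 ⊢
                  omega
                · simp only [nfWord_append, nfWord_pair]
                  rw [hW', hC, hk₂]
                  have hcomm : TLgen β m a * wordProd β m C = wordProd β m C * TLgen β m a := by
                    apply wp_comm
                    intro b hb
                    have := hCmem b hb
                    omega
                  have habs : TLgen β m a * TLgen β m k * TLgen β m a = TLgen β m a :=
                    gen_absorb a k (Or.inl h3)
                  have key : TLgen β m a * (wordProd β m C * (TLgen β m k * TLgen β m a))
                      = wordProd β m C * TLgen β m a := by
                    rw [← mul_assoc, hcomm, mul_assoc, ← mul_assoc (TLgen β m a), habs]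
                  simp only [wp_append, wp_single, wp_cons, wp_nil, one_smul, mul_one, one_mul, mul_assoc]
                  rw [key]
              · -- k₂ < a : extend the last block
                left
                have hext : descRun j k ++ [a] = descRun j a :=
                  (descRun_concat j k a hkj' h3).symm
                refine ⟨(L₀₀ ++ [(j₂, k₂)]) ++ [(j, a)], ?_, ?_, ?_, ?_, ?_⟩
                · refine (good_concat_iff _ j a).2 ⟨hL₀, ?_, by omega⟩
                  intro x hx
                  refine ⟨(hbnd x hx).1, ?_⟩
                  rcases List.mem_append.1 hx with hx | hx
                  · have := (hbnd₂ x hx).2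
                    omega
                  · simp only [List.mem_singleton] at hx
                    subst hx
                    simp only []
                    omega
                · intro x hx
                  rcases List.mem_append.1 hx with hx | hx
                  · exact List.mem_cons_of_mem _
                      (List.mem_map.2 ⟨x, List.mem_append_left _ hx, rfl⟩)
                  · simp only [List.mem_singleton] at hx; subst hx
                    exact List.mem_cons_of_mem _
                      (List.mem_map.2 ⟨(j, k), List.mem_append_right _ (by simp), rfl⟩)
                · intro x hx
                  rcases List.mem_append.1 hx with hx | hx
                  · exact List.mem_cons_of_mem _
                      (List.mem_map.2 ⟨x, List.mem_append_left _ hx, rfl⟩)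
                  · simp only [List.mem_singleton] at hx; subst hx; simp
                · simp only [nfWord_append, nfWord_pair]
                  have := congrArg List.length hext
                  simp only [List.length_append, List.length_cons, List.length_nil] at this ⊢
                  omega
                · simp only [nfWord_append, nfWord_pair]
                  rw [List.append_assoc, hext]
          · -- a + 1 < k : commute past the last block and recurse
            have hcomm : TLgen β m a * wordProd β m (descRun j k)
                = wordProd β m (descRun j k) * TLgen β m a := by
              apply wp_comm
              intro b hb
              have := descRun_mem hb
              omega
            have key : wordProd β m (nfWord (L₀ ++ [(j, k)]) ++ [a])
                = wordProd β m (nfWord L₀ ++ [a]) * wordProd β m (descRun j k) := by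
              rw [nfWord_append, nfWord_pair, wp_append, wp_append, wp_append, wp_single,
                mul_assoc, ← hcomm, ← mul_assoc]
            rcases IH hL₀ with ⟨L₀', g', mf, ms, hlen, heq⟩ | ⟨l'', c, hl, he⟩
            · left
              refine ⟨L₀' ++ [(j, k)], ?_, ?_, ?_, ?_, ?_⟩
              · refine (good_concat_iff _ j k).2 ⟨g', ?_, hkj'⟩
                intro x hx
                constructor
                · rcases List.mem_cons.1 (mf x hx) with h | h
                  · rw [h]; omega
                  · obtain ⟨y, hy, hxy⟩ := List.mem_map.1 h
                    rw [← hxy]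
                    exact (hbnd y hy).1
                · rcases List.mem_cons.1 (ms x hx) with h | h
                  · rw [h]; omega
                  · obtain ⟨y, hy, hxy⟩ := List.mem_map.1 h
                    rw [← hxy]
                    exact (hbnd y hy).2
              · intro x hx
                rcases List.mem_append.1 hx with hx | hx
                · rcases List.mem_cons.1 (mf x hx) with h | h
                  · simp [h]
                  · refine List.mem_cons_of_mem _ ?_
                    rw [List.map_append]
                    exact List.mem_append_left _ h
                · simp only [List.mem_singleton] at hx; subst hx; simp
              · intro x hx
                rcases List.mem_append.1 hx with hx | hx
                · rcases List.mem_cons.1 (ms x hx) with h | h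
                  · simp [h]
                  · refine List.mem_cons_of_mem _ ?_
                    rw [List.map_append]
                    exact List.mem_append_left _ h
                · simp only [List.mem_singleton] at hx; subst hx; simp
              · rw [nfWord_append, nfWord_pair, nfWord_append, nfWord_pair]
                simp only [List.length_append] at hlen ⊢
                omega
              · rw [key, heq, nfWord_append, nfWord_pair, wp_append]
            · right
              refine ⟨l'' ++ descRun j k, c, ?_, ?_⟩
              · rw [nfWord_append, nfWord_pair]
                simp only [List.length_append] at hl ⊢
                omega
              · rw [key, he, wp_append, smul_mul_assoc]
        · -- k ≤ a ≤ j : reduction inside the last block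
          right
          have hka : k.val ≤ a.val := by omega
          have haj : a.val ≤ j.val := by omega
          by_cases h5 : a.val = k.val
          · -- square
            have hak : a = k := Fin.ext h5
            obtain ⟨W, hW, _⟩ := descRun_last j k hkj'
            refine ⟨nfWord (L₀ ++ [(j, k)]), β, by omega, ?_⟩
            rw [hak, nfWord_append, nfWord_pair, hW]
            simp only [wp_append, wp_single, wp_cons, wp_nil, mul_one, one_mul, mul_assoc]
            rw [gen_sq k]
            simp only [mul_smul_comm]
          · -- absorb within the block
            obtain ⟨W, B, hWB, hB⟩ := descRun_split' j a k (by omega) haj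
            set a' : Fin m := ⟨a.val - 1, Nat.lt_of_le_of_lt (Nat.sub_le _ _) a.isLt⟩ with ha'
            refine ⟨nfWord L₀ ++ (W ++ [a] ++ B), 1, ?_, ?_⟩
            · have := congrArg List.length hWB
              rw [nfWord_append, nfWord_pair]
              simp only [List.length_append, List.length_cons, List.length_nil] at this ⊢
              omega
            · rw [nfWord_append, nfWord_pair, hWB]
              have hcomm : TLgen β m a * wordProd β m B = wordProd β m B * TLgen β m a := by
                apply wp_comm
                intro b hb
                exact Or.inl (hB b hb)
              have habs : TLgen β m a * TLgen β m a' * TLgen β m a = TLgen β m a :=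
                gen_absorb a a' (Or.inr (by simp only [ha']; omega))
              have key : TLgen β m a * (TLgen β m a' * (wordProd β m B * TLgen β m a))
                  = TLgen β m a * wordProd β m B := by
                rw [← hcomm, ← mul_assoc, ← mul_assoc, habs]
              simp only [wp_append, wp_single, wp_cons, wp_nil, one_smul, mul_one, one_mul, mul_assoc]
              rw [key]

/-! ### The main induction -/

lemma main_lemma (β : ℂ) {m : ℕ} (l : List (Fin m)) :
    (∃ L, good L ∧ (nfWord L).length = l.length ∧
        wordProd β m l = wordProd β m (nfWord L)) ∨
    (∃ (l' : List (Fin m)) (c : ℂ), l'.length < l.length ∧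
        wordProd β m l = c • wordProd β m l') := by
  induction l using List.reverseRecOn with
  | nil => exact Or.inl ⟨[], good_nil, rfl, rfl⟩
  | append_singleton l a IH =>
      rcases IH with ⟨L, hg, hlen, heq⟩ | ⟨l', c, hl, he⟩
      · have h0 : wordProd β m (l ++ [a]) = wordProd β m (nfWord L ++ [a]) := by
          rw [wp_append, wp_append, heq]
        rcases append_step β L a hg with ⟨L', g', _, _, hlen', heq'⟩ | ⟨l', c, hl', he'⟩
        · refine Or.inl ⟨L', g', ?_, by rw [h0, heq']⟩
          simp only [List.length_append, List.length_cons, List.length_nil]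
          omega
        · refine Or.inr ⟨l', c, ?_, by rw [h0, he']⟩
          simp only [List.length_append, List.length_cons, List.length_nil]
          omega
      · refine Or.inr ⟨l' ++ [a], c, ?_, ?_⟩
        · simp only [List.length_append, List.length_cons, List.length_nil]
          omega
        · rw [wp_append, wp_append, he, smul_mul_assoc]

end TLAux

/-- Jones' normal form: any reduced Temperley–Lieb word can be written as
`(u_{j_1} u_{j_1-1} ⋯ u_{k_1}) ⋯ (u_{j_r} u_{j_r-1} ⋯ u_{k_r})` with
`j_1 < … < j_r`, `k_1 < … < k_r` and `k_i ≤ j_i` for all `i`. -/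
theorem stmt_5 (β : ℂ) (m : ℕ) (l : List (Fin m)) (hred : Reduced β m l) :
    ∃ (r : ℕ) (j k : Fin r → Fin m), StrictMono j ∧ StrictMono k ∧
      (∀ i, k i ≤ j i) ∧
      wordProd β m l = wordProd β m ((List.ofFn (fun i => descRun (j i) (k i))).flatten) := by
  rcases main_lemma β l with ⟨L, hg, -, heq⟩ | ⟨l', c, hl, he⟩
  · refine ⟨L.length, fun i => (L.get i).1, fun i => (L.get i).2, ?_, ?_, ?_, ?_⟩
    · intro i₁ i₂ hlt
      have hp := List.pairwise_iff_getElem.1 hg.1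
      have := hp i₁ i₂ (by simpa using i₁.isLt) (by simpa using i₂.isLt) hlt
      simpa [List.getElem_map, List.get_eq_getElem] using this
    · intro i₁ i₂ hlt
      have hp := List.pairwise_iff_getElem.1 hg.2.1
      have := hp i₁ i₂ (by simpa using i₁.isLt) (by simpa using i₂.isLt) hlt
      simpa [List.getElem_map, List.get_eq_getElem] using this
    · intro i
      exact hg.2.2 (L.get i) (List.get_mem L i)
    · rw [heq]
      congr 1
      have : (List.ofFn (fun i : Fin L.length => descRun (L.get i).1 (L.get i).2))
          = L.map (fun p => descRun p.1 p.2) := by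
        simpa [List.get_eq_getElem] using
          List.ofFn_getElem_eq_map L (fun p => descRun p.1 p.2)
      rw [this]
      rfl
  · exact absurd ⟨l', c, hl, he⟩ hred
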